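/- Let G be a connected chemical graph with n vertices and cyclomatic number c ≥ 2, where c = m − n + 1. If n > 2c − 2, then s(G) = (1/n)·[(2n − 4c + 4)·n₃(G) + (4n − 4c + 4)·n₄(G)]. -/

import Mathlib

open Finset

/-- The degree deviation measure `s(G) = ∑_v |deg(v) - 2m/n|`. -/
noncomputable def degDev {V : Type*} [Fintype V] [DecidableEq V]
    (G : SimpleGraph V) [DecidableRel G.Adj] : ℝ :=
  ∑ v : V, |(G.degree v : ℝ) - 2 * G.edgeFinset.card / (Fintype.card V)|


/-- The number of vertices of degree `i` in `G`. -/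
def degCount {V : Type*} [Fintype V] [DecidableEq V]
    (G : SimpleGraph V) [DecidableRel G.Adj] (i : ℕ) : ℕ :=
  (Finset.univ.filter (fun v => G.degree v = i)).card

theorem degDev_chemical_large_n {n : ℕ} (G : SimpleGraph (Fin n))
    [DecidableRel G.Adj] (hconn : G.Connected) (hdeg : ∀ v, G.degree v ≤ 4)
    (c : ℕ) (hcge : 2 ≤ c) (hc : G.edgeFinset.card + 1 = n + c)
    (hlarge : 2 * c - 2 < n) :
    degDev G = 1 / n *
      ((2 * (n : ℝ) - 4 * c + 4) * degCount G 3 + (4 * (n : ℝ) - 4 * c + 4) * degCount G 4) := by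
  classical
  have hn : 0 < n := by omega
  have hnR : (0:ℝ) < n := by exact_mod_cast hn
  set a : ℝ := 2 * G.edgeFinset.card / n with ha
  have hcard : (G.edgeFinset.card : ℝ) = (n:ℝ) + c - 1 := by
    have h : (G.edgeFinset.card : ℝ) + 1 = (n : ℝ) + c := by exact_mod_cast hc
    linarith
  have hcR : (2:ℝ) ≤ c := by exact_mod_cast hcge
  have hlR : 2*(c:ℝ) - 2 < n := by
    have h : 2*c < n + 2 := by omega
    have : (2*(c:ℝ)) < n + 2 := by exact_mod_cast h
    linarith
  have ha2 : 2 < a := by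
    rw [ha, lt_div_iff₀ hnR, hcard]; linarith
  have ha3 : a < 3 := by
    rw [ha, div_lt_iff₀ hnR, hcard]; linarith
  have hhs : (∑ v : Fin n, (G.degree v : ℝ)) = 2 * G.edgeFinset.card := by
    exact_mod_cast congrArg (Nat.cast : ℕ → ℝ) G.sum_degrees_eq_twice_card_edges
  have hzero : ∑ v : Fin n, ((G.degree v : ℝ) - a) = 0 := by
    rw [Finset.sum_sub_distrib, hhs, Finset.sum_const, card_univ, Fintype.card_fin, nsmul_eq_mul, ha]
    field_simp
    ring
  have habs : ∀ v : Fin n, |(G.degree v : ℝ) - a| =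
      if 3 ≤ G.degree v then (G.degree v : ℝ) - a else a - G.degree v := by
    intro v
    by_cases h : 3 ≤ G.degree v
    · rw [if_pos h, abs_of_nonneg]
      have : (3:ℝ) ≤ G.degree v := by exact_mod_cast h
      linarith
    · rw [if_neg h, abs_of_neg, neg_sub]
      have : (G.degree v : ℝ) ≤ 2 := by
        have : G.degree v ≤ 2 := by omega
        exact_mod_cast this
      linarith
  have hdd : degDev G = ∑ v ∈ univ.filter (fun v => 3 ≤ G.degree v), ((G.degree v : ℝ) - a)
      + ∑ v ∈ univ.filter (fun v => ¬ 3 ≤ G.degree v), (a - (G.degree v : ℝ)) := by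
    unfold degDev
    simp only [Fintype.card_fin, ← ha, habs]
    exact Finset.sum_ite _ _
  have hzero' := (Finset.sum_filter_add_sum_filter_not univ (fun v => 3 ≤ G.degree v)
      (fun v => (G.degree v : ℝ) - a)).trans hzero
  have hneg : ∑ v ∈ univ.filter (fun v => ¬ 3 ≤ G.degree v), (a - (G.degree v : ℝ))
      = ∑ v ∈ univ.filter (fun v => 3 ≤ G.degree v), ((G.degree v : ℝ) - a) := by
    have : ∑ v ∈ univ.filter (fun v => ¬ 3 ≤ G.degree v), (a - (G.degree v : ℝ))
        = - ∑ v ∈ univ.filter (fun v => ¬ 3 ≤ G.degree v), ((G.degree v : ℝ) - a) := by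
      rw [← Finset.sum_neg_distrib]; apply Finset.sum_congr rfl; intros; ring
    rw [this]; linarith
  have hSsplit : univ.filter (fun v : Fin n => 3 ≤ G.degree v)
      = (univ.filter (fun v => G.degree v = 3)) ∪ (univ.filter (fun v => G.degree v = 4)) := by
    ext v
    simp only [Finset.mem_filter, Finset.mem_union, Finset.mem_univ, true_and]
    have := hdeg v; omega
  have hdisj : Disjoint (univ.filter (fun v : Fin n => G.degree v = 3))
      (univ.filter (fun v => G.degree v = 4)) := by
    rw [Finset.disjoint_filter]
    intro v _ h3; omega
  have h3sum : ∑ v ∈ univ.filter (fun v : Fin n => G.degree v = 3), ((G.degree v : ℝ) - a)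
      = (degCount G 3 : ℝ) * (3 - a) := by
    have heq : ∀ v ∈ univ.filter (fun v : Fin n => G.degree v = 3),
        ((G.degree v : ℝ) - a) = (3 - a) := by
      intro v hv; simp only [Finset.mem_filter] at hv; rw [hv.2]; norm_num
    rw [Finset.sum_congr rfl heq, Finset.sum_const, nsmul_eq_mul, degCount]
  have h4sum : ∑ v ∈ univ.filter (fun v : Fin n => G.degree v = 4), ((G.degree v : ℝ) - a)
      = (degCount G 4 : ℝ) * (4 - a) := by
    have heq : ∀ v ∈ univ.filter (fun v : Fin n => G.degree v = 4),
        ((G.degree v : ℝ) - a) = (4 - a) := by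
      intro v hv; simp only [Finset.mem_filter] at hv; rw [hv.2]; norm_num
    rw [Finset.sum_congr rfl heq, Finset.sum_const, nsmul_eq_mul, degCount]
  have hmain : degDev G = 2 * ((degCount G 3 : ℝ) * (3 - a) + (degCount G 4 : ℝ) * (4 - a)) := by
    rw [hdd, hneg, hSsplit, Finset.sum_union hdisj, h3sum, h4sum]; ring
  rw [hmain, ha, hcard]
  field_simp
  ring
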